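/- Let t_f > 0, K ≥ 1, and let w : (0,∞) → [0,∞) be non-increasing with w(t) > 0 for t < t_f, w(t_f) = 0, and K^{−1}|t−s| ≤ |w(t)−w(s)| ≤ K|t−s| for all t_f/4 ≤ s ≤ t ≤ t_f. Let J₁, J₂, … be i.i.d. random variables with P(J_i ≥ u) = w(max{u, t_f/9}) / w(t_f/9). Then for every k ∈ ℕ and every u ∈ (0, t_f/4], P(Σ_{i=1}^k J_i ≥ k t_f − u) ≤ (K u / w(t_f/9))^k. -/

import Mathlib

open MeasureTheory Real Set Filter ProbabilityTheory

/-- For i.i.d. jumps `J_i` with `P(J_i ≥ u) = w(max{u, t_f/9})/w(t_f/9)`, where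
`w` is the truncated kernel, `P(Σ_{i<k} J_i ≥ k t_f - u) ≤ (K u / w(t_f/9))^k` for
`u ∈ (0, t_f/4]`. -/
theorem iid_jump_sum_near_maximum_bound
    {Ω : Type*} [MeasurableSpace Ω] (P : Measure Ω) [IsProbabilityMeasure P]
    (J : ℕ → Ω → ℝ) (w : ℝ → ℝ) (t_f K : ℝ)
    (ht_f : 0 < t_f) (hK : 1 ≤ K)
    (hw_anti : ∀ s t, 0 < s → s ≤ t → w t ≤ w s)
    (hw_pos : ∀ t, 0 < t → t < t_f → 0 < w t)
    (hw_tf : w t_f = 0)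
    (hw_lip : ∀ s t, t_f / 4 ≤ s → s ≤ t → t ≤ t_f →
      K⁻¹ * |t - s| ≤ |w t - w s| ∧ |w t - w s| ≤ K * |t - s|)
    (hJ_meas : ∀ i, Measurable (J i))
    (hJ_indep : iIndepFun J P)
    (hJ_dist : ∀ i : ℕ, ∀ u : ℝ, 0 < u →
      (P {ω | u ≤ J i ω}).toReal = w (max u (t_f / 9)) / w (t_f / 9)) :
    ∀ k : ℕ, ∀ u : ℝ, 0 < u → u ≤ t_f / 4 →
      (P {ω | (k : ℝ) * t_f - u ≤ ∑ i ∈ Finset.range k, J i ω}).toReal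
        ≤ (K * u / w (t_f / 9)) ^ k := by
  intro k u hu hu4
  set w0 := w (t_f / 9) with hw0def
  have hw0 : 0 < w0 := hw_pos _ (by linarith) (by linarith)
  -- the value p = P(J i ≥ t_f - u)
  have htfu : t_f / 9 ≤ t_f - u := by linarith
  have hp_eq : ∀ i : ℕ, (P {ω | t_f - u ≤ J i ω}).toReal = w (t_f - u) / w0 := by
    intro i
    rw [hJ_dist i (t_f - u) (by linarith), max_eq_left htfu]
  -- w (t_f - u) ≤ K * u
  have hwnn : 0 ≤ w (t_f - u) := le_of_lt (hw_pos _ (by linarith) (by linarith))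
  have hwu : w (t_f - u) ≤ K * u := by
    have h := (hw_lip (t_f - u) t_f (by linarith) (by linarith) le_rfl).2
    rw [hw_tf] at h
    rw [abs_of_nonpos (by linarith), abs_of_nonneg (by linarith)] at h
    linarith
  have hp_le : w (t_f - u) / w0 ≤ K * u / w0 := by gcongr
  -- null sets {t_f ≤ J i}
  have hnull : ∀ i : ℕ, P {ω | t_f ≤ J i ω} = 0 := by
    intro i
    have h := hJ_dist i t_f ht_f
    rw [max_eq_left (by linarith), hw_tf, zero_div] at h
    exact (ENNReal.toReal_eq_zero_iff _).mp h |>.resolve_right (measure_ne_top P _)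
  -- inclusion
  have hincl : {ω | (k : ℝ) * t_f - u ≤ ∑ i ∈ Finset.range k, J i ω} ⊆
      (⋃ i ∈ Finset.range k, {ω | t_f ≤ J i ω}) ∪
        ⋂ i ∈ Finset.range k, {ω | t_f - u ≤ J i ω} := by
    intro ω hω
    by_cases hbig : ∃ i ∈ Finset.range k, t_f ≤ J i ω
    · left
      obtain ⟨i, hi, h⟩ := hbig
      exact Set.mem_biUnion hi h
    · right
      push_neg at hbig
      simp only [Set.mem_iInter, Set.mem_setOf_eq]
      intro i hi
      by_contra hlt
      push_neg at hlt
      have hsum : ∑ j ∈ Finset.range k, J j ω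
          = J i ω + ∑ j ∈ (Finset.range k).erase i, J j ω :=
        (Finset.add_sum_erase _ _ hi).symm
      have herase : ∑ j ∈ (Finset.range k).erase i, J j ω ≤ ((k - 1 : ℕ) : ℝ) * t_f := by
        have := Finset.sum_le_card_nsmul ((Finset.range k).erase i) (fun j => J j ω) t_f
          (fun j hj => le_of_lt (hbig j (Finset.mem_of_mem_erase hj)))
        simpa [Finset.card_erase_of_mem hi, nsmul_eq_mul] using this
      have hik := Finset.mem_range.mp hi
      have hk1 : 1 ≤ k := by omega
      have hkcast : ((k - 1 : ℕ) : ℝ) = (k : ℝ) - 1 := by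
        push_cast [Nat.cast_sub hk1]; ring
      rw [hkcast] at herase
      have hS : (k : ℝ) * t_f - u ≤ J i ω + ∑ j ∈ (Finset.range k).erase i, J j ω := by
        rw [← hsum]; exact hω
      nlinarith
  -- measure bound
  have hmeas_inter : P {ω | (k : ℝ) * t_f - u ≤ ∑ i ∈ Finset.range k, J i ω}
      ≤ P (⋂ i ∈ Finset.range k, {ω | t_f - u ≤ J i ω}) := by
    calc P {ω | (k : ℝ) * t_f - u ≤ ∑ i ∈ Finset.range k, J i ω}
        ≤ P ((⋃ i ∈ Finset.range k, {ω | t_f ≤ J i ω}) ∪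
            ⋂ i ∈ Finset.range k, {ω | t_f - u ≤ J i ω}) := measure_mono hincl
      _ ≤ P (⋃ i ∈ Finset.range k, {ω | t_f ≤ J i ω}) +
            P (⋂ i ∈ Finset.range k, {ω | t_f - u ≤ J i ω}) := measure_union_le _ _
      _ = P (⋂ i ∈ Finset.range k, {ω | t_f - u ≤ J i ω}) := by
          have h0 : P (⋃ i ∈ Finset.range k, {ω | t_f ≤ J i ω}) = 0 :=
            (measure_biUnion_null_iff (Finset.countable_toSet _)).mpr (fun i _ => hnull i)
          rw [h0, zero_add]
  -- independence
  have hindep : P (⋂ i ∈ Finset.range k, {ω | t_f - u ≤ J i ω})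
      = ∏ i ∈ Finset.range k, P {ω | t_f - u ≤ J i ω} := by
    apply hJ_indep.meas_biInter
    intro i _
    exact ⟨Set.Ici (t_f - u), measurableSet_Ici, rfl⟩
  have hfin : P (⋂ i ∈ Finset.range k, {ω | t_f - u ≤ J i ω}) ≠ ⊤ := measure_ne_top P _
  calc (P {ω | (k : ℝ) * t_f - u ≤ ∑ i ∈ Finset.range k, J i ω}).toReal
      ≤ (P (⋂ i ∈ Finset.range k, {ω | t_f - u ≤ J i ω})).toReal :=
        ENNReal.toReal_mono hfin hmeas_inter
    _ = ∏ i ∈ Finset.range k, (P {ω | t_f - u ≤ J i ω}).toReal := by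
        rw [hindep, ENNReal.toReal_prod]
    _ = (w (t_f - u) / w0) ^ k := by
        rw [Finset.prod_congr rfl (fun i _ => hp_eq i), Finset.prod_const, Finset.card_range]
    _ ≤ (K * u / w0) ^ k := by
        apply pow_le_pow_left₀ (div_nonneg hwnn hw0.le) hp_le
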